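/- Let p ∈ L be divisible by u and such that z⁻ʲ·p is V-holomorphic. For m ≥ 0 let L_m := L/(u^{m+1}) and let A_m ⊆ L_m be the image of ℂ[z,u]; call an element of L_m V-holomorphic if every monomial zˢuʳ (0 ≤ r ≤ m) occurring in it satisfies s ≤ kr. Let W_m(p) := {σ = (a,b,c,d) ∈ L_m⁴ : all four entries of S_p σ = (a + zʲp·b + z⁻ʲp·c + p²·d, z²ʲ·b + zʲp·d, z⁻²ʲ·c + z⁻ʲp·d, d) are V-holomorphic}. Then the ℂ-vector spaces H⁰_m(p) := A_m⁴ ∩ W_m(p) and H¹_m(p) := L_m⁴/(A_m⁴ + W_m(p)) are finite-dimensional, and for every m ≥ 0: dim H¹_m(p) − dim H⁰_m(p) = dim H¹_m(0) − dim H⁰_m(0). (This is the statement that the holomorphic Euler characteristic of End E restricted to the m-th infinitesimal neighbourhood of the zero section is the same for the bundle determined by (j,p) and for the split bundle.) -/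

import Mathlib

noncomputable section

/-- `L = ℂ[z,z⁻¹][u]`: Laurent polynomials in `z` with polynomial coefficients in `u`,
realised as the algebra of finitely supported ℂ-linear combinations of monomials on the
exponent monoid `ℤ × ℕ`, where `(s, r)` is the exponent of the monomial `zˢuʳ`. -/
abbrev L : Type := AddMonoidAlgebra ℂ (ℤ × ℕ)

/-- The monomial `zˢ` (`s ∈ ℤ`). -/
def zp (s : ℤ) : L := AddMonoidAlgebra.single (s, 0) 1

/-- The monomial `u`. -/
def uu : L := AddMonoidAlgebra.single (0, 1) 1

/-- `f` is V-holomorphic: every monomial `zˢuʳ` occurring in `f` satisfies `s ≤ k·r`,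
i.e. `f` is holomorphic in the coordinates `(z⁻¹, zᵏu)` of the chart `V` of `Z_k`. -/
def VHol (k : ℕ) (f : L) : Prop := ∀ (s : ℤ) (r : ℕ), f.coeff (s, r) ≠ 0 → s ≤ (k : ℤ) * r

/-- `f` lies in `ℂ[z,u] ⊆ L`, i.e. is holomorphic on the chart `U`. -/
def MemPolyRing (f : L) : Prop := ∀ (s : ℤ) (r : ℕ), f.coeff (s, r) ≠ 0 → 0 ≤ s

/-- The truncation `L_m = L/(u^{m+1})`, the functions on the m-th infinitesimal
neighbourhood of the zero section (over `U ∩ V`). -/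
abbrev Lm (m : ℕ) : Type := L ⧸ Ideal.span {uu ^ (m + 1)}

/-- The quotient map `L → L_m`. -/
def mkm (m : ℕ) : L →+* Lm m := Ideal.Quotient.mk _

/-- V-holomorphy in `L_m`: every monomial `zˢuʳ` with `0 ≤ r ≤ m` occurring in it (i.e. in any
representative) satisfies `s ≤ k·r`. -/
def VHolm (k m : ℕ) (f : Lm m) : Prop :=
  ∀ g : L, mkm m g = f → ∀ (s : ℤ) (r : ℕ), r ≤ m → g.coeff (s, r) ≠ 0 → s ≤ (k : ℤ) * r

/-- `A_m ⊆ L_m`: the image of `ℂ[z,u]`. -/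
def Am (m : ℕ) : Set (Lm m) := {f | ∃ g : L, MemPolyRing g ∧ mkm m g = f}

/-- Quadruples over `L_m`, representing sections `σ = (a,b,c,d)` of `End E` over `U ∩ V`
on the m-th infinitesimal neighbourhood. -/
abbrev Q4 (m : ℕ) : Type := Lm m × Lm m × Lm m × Lm m

/-- `W_m(p)`: quadruples all four entries of whose transform
`S_p σ = (a + zʲp·b + z⁻ʲp·c + p²·d, z²ʲ·b + zʲp·d, z⁻²ʲ·c + z⁻ʲp·d, d)`
are V-holomorphic, i.e. sections of `End E` over `V` on the m-th neighbourhood. -/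
def Wm (k j m : ℕ) (p : L) : Set (Q4 m) :=
  {σ | VHolm k m (σ.1 + mkm m (zp (j : ℤ) * p) * σ.2.1
          + mkm m (zp (-(j : ℤ)) * p) * σ.2.2.1 + mkm m (p * p) * σ.2.2.2) ∧
       VHolm k m (mkm m (zp (2 * (j : ℤ))) * σ.2.1 + mkm m (zp (j : ℤ) * p) * σ.2.2.2) ∧
       VHolm k m (mkm m (zp (-(2 * (j : ℤ)))) * σ.2.2.1
          + mkm m (zp (-(j : ℤ)) * p) * σ.2.2.2) ∧
       VHolm k m σ.2.2.2}

/-- `A_m⁴ ⊆ L_m⁴`: sections of `End E` over `U` on the m-th neighbourhood. -/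
def Am4 (m : ℕ) : Set (Q4 m) := {σ | σ.1 ∈ Am m ∧ σ.2.1 ∈ Am m ∧ σ.2.2.1 ∈ Am m ∧ σ.2.2.2 ∈ Am m}

/-- `H⁰_m(p) = A_m⁴ ∩ W_m(p)` (a ℂ-subspace, realised as the span of that set). -/
def H0m (k j m : ℕ) (p : L) : Submodule ℂ (Q4 m) := Submodule.span ℂ (Am4 m ∩ Wm k j m p)

/-- `H¹_m(p) = L_m⁴ / (A_m⁴ + W_m(p))`. -/
abbrev H1m (k j m : ℕ) (p : L) : Type := Q4 m ⧸ Submodule.span ℂ (Am4 m ∪ Wm k j m p)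


section Basic
open AddMonoidAlgebra Finsupp

lemma zp_mul_zp (a b : ℤ) : zp a * zp b = zp (a + b) := by
  simp [zp, AddMonoidAlgebra.single_mul_single, Prod.mk_add_mk]

lemma zp_zero : zp 0 = (1 : L) := rfl

lemma uu_pow (n : ℕ) : uu ^ n = AddMonoidAlgebra.single ((0 : ℤ), n) (1 : ℂ) := by
  rw [uu, AddMonoidAlgebra.single_pow]
  congr 1
  · simp [Prod.smul_mk]
  · simp

lemma mem_uuIdeal_iff {m : ℕ} (f : L) :
    f ∈ Ideal.span {uu ^ (m + 1)} ↔ ∀ x : ℤ × ℕ, x.2 ≤ m → f.coeff x = 0 := by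
  classical
  constructor
  · intro h x hx
    rw [Ideal.mem_span_singleton] at h
    obtain ⟨g, rfl⟩ := h
    by_contra hne
    have hxs : x ∈ (uu ^ (m+1) * g).coeff.support := Finsupp.mem_support_iff.mpr hne
    have := AddMonoidAlgebra.support_coeff_mul_subset (uu ^ (m+1)) g hxs
    rw [Finset.mem_add] at this
    obtain ⟨a, ha, b, hb, hab⟩ := this
    have ha' : a = ((0:ℤ), m+1) := by
      by_contra hne'
      rw [uu_pow] at ha
      exact Finsupp.mem_support_iff.mp ha (Finsupp.single_eq_of_ne' (fun h => hne' h.symm))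
    subst ha'
    have := congrArg Prod.snd hab
    simp only [Prod.snd_add] at this
    omega
  · induction f using AddMonoidAlgebra.induction with
    | zero => exact fun _ => zero_mem _
    | single_add a b f hasupp hb ih =>
      intro h
      have hfa : f.coeff a = 0 := Finsupp.notMem_support_iff.mp hasupp
      have h2 : ∀ x : ℤ × ℕ, x.2 ≤ m → f.coeff x = 0 := by
        intro x hx
        by_cases hxa : x = a
        · rw [hxa]; exact hfa
        · have := h x hx
          rwa [AddMonoidAlgebra.coeff_add, Finsupp.add_apply, AddMonoidAlgebra.coeff_single, Finsupp.single_apply, if_neg (fun hh => hxa hh.symm),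
            zero_add] at this
      have hb2 : m + 1 ≤ a.2 := by
        by_contra hle
        push_neg at hle
        have := h a (by omega)
        rw [AddMonoidAlgebra.coeff_add, Finsupp.add_apply, AddMonoidAlgebra.coeff_single, Finsupp.single_apply, if_pos rfl, hfa, add_zero] at this
        exact hb this
      refine add_mem ?_ (ih h2)
      rw [Ideal.mem_span_singleton]
      refine ⟨AddMonoidAlgebra.single (a.1, a.2 - (m+1)) b, ?_⟩
      rw [uu_pow, AddMonoidAlgebra.single_mul_single, one_mul]
      congr 1
      ext
      · simp
      · simp; omega



variable {m : ℕ}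

lemma mkm_surjective (m : ℕ) : Function.Surjective (mkm m) :=
  Ideal.Quotient.mk_surjective

lemma mkm_eq_iff {g g' : L} : mkm m g = mkm m g' ↔ ∀ x : ℤ × ℕ, x.2 ≤ m → g.coeff x = g'.coeff x := by
  rw [mkm, Ideal.Quotient.mk_eq_mk_iff_sub_mem, mem_uuIdeal_iff]
  constructor
  · intro h x hx
    have := h x hx
    rw [AddMonoidAlgebra.coeff_sub, Finsupp.sub_apply, sub_eq_zero] at this
    exact this
  · intro h x hx
    rw [AddMonoidAlgebra.coeff_sub, Finsupp.sub_apply, sub_eq_zero]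
    exact h x hx

lemma mkm_zero_iff {g : L} : mkm m g = 0 ↔ ∀ x : ℤ × ℕ, x.2 ≤ m → g.coeff x = 0 := by
  rw [show (0 : Lm m) = mkm m 0 from (map_zero _).symm, mkm_eq_iff]
  simp

lemma mkm_smul (c : ℂ) (g : L) : mkm m (c • g) = c • mkm m g :=
  (Ideal.Quotient.mkₐ ℂ (Ideal.span {uu ^ (m+1)})).toLinearMap.map_smul c g

/-- The submodule of `L_m` of classes whose representatives are supported, within
`u`-degree `≤ m`, on monomials satisfying `P`. -/
def suppIn (m : ℕ) (P : ℤ × ℕ → Prop) : Submodule ℂ (Lm m) where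
  carrier := {f | ∀ g : L, mkm m g = f → ∀ x : ℤ × ℕ, x.2 ≤ m → ¬ P x → g.coeff x = 0}
  zero_mem' := fun g hg x hx _ => mkm_zero_iff.mp hg x hx
  add_mem' := by
    intro f1 f2 h1 h2 g hg x hx hPx
    obtain ⟨g1, hg1⟩ := mkm_surjective m f1
    have hg2 : mkm m (g - g1) = f2 := by rw [map_sub, hg1, hg]; abel
    have e1 := h1 g1 hg1 x hx hPx
    have e2 := h2 (g - g1) hg2 x hx hPx
    rw [AddMonoidAlgebra.coeff_sub, Finsupp.sub_apply, sub_eq_zero] at e2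
    rw [e2, e1]
  smul_mem' := by
    intro c f hf g hg x hx hPx
    obtain ⟨g1, hg1⟩ := mkm_surjective m f
    have hg2 : mkm m (g - c • g1) = 0 := by
      rw [map_sub, hg, mkm_smul, hg1]; abel
    have e1 := hf g1 hg1 x hx hPx
    have e2 := mkm_zero_iff.mp hg2 x hx
    rw [AddMonoidAlgebra.coeff_sub, Finsupp.sub_apply, AddMonoidAlgebra.coeff_smul, Finsupp.smul_apply, e1, smul_zero, sub_zero] at e2
    exact e2

lemma mem_suppIn_iff {f : Lm m} {P : ℤ × ℕ → Prop} :
    f ∈ suppIn m P ↔ ∀ g : L, mkm m g = f → ∀ x : ℤ × ℕ, x.2 ≤ m → ¬ P x → g.coeff x = 0 :=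
  Iff.rfl

lemma mem_suppIn {g : L} {P : ℤ × ℕ → Prop} :
    mkm m g ∈ suppIn m P ↔ ∀ x : ℤ × ℕ, x.2 ≤ m → ¬ P x → g.coeff x = 0 := by
  rw [mem_suppIn_iff]
  constructor
  · exact fun h => h g rfl
  · intro h g' hg' x hx hPx
    have := mkm_eq_iff.mp hg' x hx
    rw [this]; exact h x hx hPx

lemma suppIn_mono {P P' : ℤ × ℕ → Prop} (h : ∀ x, x.2 ≤ m → P x → P' x) :
    suppIn m P ≤ suppIn m P' := by
  intro f hf
  rw [mem_suppIn_iff] at hf ⊢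
  intro g hg x hx hPx
  exact hf g hg x hx (fun hP => hPx (h x hx hP))

lemma suppIn_inf_le {P P' : ℤ × ℕ → Prop} :
    suppIn m P ⊓ suppIn m P' ≤ suppIn m (fun x => P x ∧ P' x) := by
  rintro f ⟨h1, h2⟩
  rw [mem_suppIn_iff] at *
  intro g hg x hx hPx
  by_cases hP : P x
  · exact h2 g hg x hx (fun h' => hPx ⟨hP, h'⟩)
  · exact h1 g hg x hx hP

lemma isCompl_suppIn (P : ℤ × ℕ → Prop) :
    IsCompl (suppIn m P) (suppIn m fun x => ¬ P x) := by
  classical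
  constructor
  · rw [_root_.disjoint_iff, eq_bot_iff]
    rintro f ⟨h1, h2⟩
    rw [SetLike.mem_coe, mem_suppIn_iff] at h1 h2
    obtain ⟨g, rfl⟩ := mkm_surjective m f
    rw [Submodule.mem_bot, mkm_zero_iff]
    intro x hx
    by_cases hP : P x
    · exact h2 g rfl x hx (fun h => h hP)
    · exact h1 g rfl x hx hP
  · rw [codisjoint_iff, eq_top_iff]
    intro f _
    obtain ⟨g, rfl⟩ := mkm_surjective m f
    rw [Submodule.mem_sup]
    refine ⟨mkm m (AddMonoidAlgebra.ofCoeff (g.coeff.filter P)), ?_,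
      mkm m (AddMonoidAlgebra.ofCoeff (g.coeff.filter fun x => ¬ P x)), ?_, ?_⟩
    · rw [mem_suppIn]
      intro x hx hPx
      rw [AddMonoidAlgebra.coeff_ofCoeff, Finsupp.filter_apply, if_neg hPx]
    · rw [mem_suppIn]
      intro x hx hPx
      rw [not_not] at hPx
      rw [AddMonoidAlgebra.coeff_ofCoeff, Finsupp.filter_apply, if_neg (fun h => h hPx)]
    · rw [← map_add]
      congr 1
      rw [← AddMonoidAlgebra.ofCoeff_add, Finsupp.filter_pos_add_filter_neg, AddMonoidAlgebra.ofCoeff_coeff]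

lemma suppIn_mul_mem {q : L} {c₁ : ℤ} {d₁ : ℕ}
    (hq : ∀ a : ℤ × ℕ, q.coeff a ≠ 0 → a.2 ≤ m → a.1 ≤ c₁ ∧ d₁ ≤ a.2)
    {P P' : ℤ × ℕ → Prop} {f : Lm m}
    (harith : ∀ a b : ℤ × ℕ, a.1 ≤ c₁ → d₁ ≤ a.2 → b.2 ≤ m → (a + b).2 ≤ m →
       P b → P' (a + b))
    (hf : f ∈ suppIn m P) : mkm m q * f ∈ suppIn m P' := by
  classical
  obtain ⟨g, rfl⟩ := mkm_surjective m f
  rw [← map_mul, mem_suppIn]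
  intro x hx hP'
  by_contra hne
  have hxs : x ∈ (q * g).coeff.support := Finsupp.mem_support_iff.mpr hne
  have := AddMonoidAlgebra.support_coeff_mul_subset q g hxs
  rw [Finset.mem_add] at this
  obtain ⟨a, ha, b, hb, hab⟩ := this
  have hb2 : b.2 ≤ m := by
    have := congrArg Prod.snd hab; simp only [Prod.snd_add] at this; omega
  have ha2 : a.2 ≤ m := by
    have := congrArg Prod.snd hab; simp only [Prod.snd_add] at this; omega
  have hqa := hq a (Finsupp.mem_support_iff.mp ha) ha2
  have hPb : P b := by
    by_contra hPb
    exact Finsupp.mem_support_iff.mp hb ((mem_suppIn_iff.mp hf) g rfl b hb2 hPb)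
  exact hP' (hab ▸ harith a b hqa.1 hqa.2 hb2 (hab ▸ hx) hPb)

lemma finiteDimensional_suppIn {lo0 Hi : ℤ} {P : ℤ × ℕ → Prop}
    (hP : ∀ x : ℤ × ℕ, P x → lo0 ≤ x.1 ∧ x.1 ≤ Hi) :
    FiniteDimensional ℂ (suppIn m P) := by
  classical
  set S : Finset (Lm m) := ((Finset.Icc lo0 Hi) ×ˢ Finset.range (m+1)).image
    (fun y => mkm m (AddMonoidAlgebra.single y 1)) with hS
  have hle : suppIn m P ≤ Submodule.span ℂ (S : Set (Lm m)) := by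
    intro f hf
    obtain ⟨g, rfl⟩ := mkm_surjective m f
    set g' := AddMonoidAlgebra.ofCoeff (g.coeff.filter (fun x : ℤ × ℕ => x.2 ≤ m)) with hg'def
    have hgg' : mkm m g' = mkm m g := by
      rw [mkm_eq_iff]
      intro x hx
      rw [hg'def, AddMonoidAlgebra.coeff_ofCoeff, Finsupp.filter_apply, if_pos hx]
    rw [← hgg']
    have hrepr : g' = g'.coeff.support.sum (fun x => AddMonoidAlgebra.single x (g'.coeff x)) := by
      exact (AddMonoidAlgebra.sum_coeff_single g').symm
    rw [hrepr, map_sum]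
    apply Submodule.sum_mem
    intro x hxs
    have h1 : AddMonoidAlgebra.single x (g'.coeff x) = (g'.coeff x) • AddMonoidAlgebra.single x (1:ℂ) := by
      rw [AddMonoidAlgebra.smul_single' (g'.coeff x) x 1, mul_one]
    rw [h1, mkm_smul]
    apply Submodule.smul_mem
    apply Submodule.subset_span
    have hx2 : x.2 ≤ m := by
      have := Finsupp.mem_support_iff.mp hxs
      rw [hg'def, AddMonoidAlgebra.coeff_ofCoeff, Finsupp.filter_apply] at this
      by_contra h
      rw [if_neg h] at this; exact this rfl
    have hgx : g.coeff x ≠ 0 := by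
      have := Finsupp.mem_support_iff.mp hxs
      rwa [hg'def, AddMonoidAlgebra.coeff_ofCoeff, Finsupp.filter_apply, if_pos hx2] at this
    have hPx : P x := by
      by_contra hPx
      exact hgx ((mem_suppIn_iff.mp hf) g rfl x hx2 hPx)
    rw [hS]
    simp only [Finset.coe_image, Set.mem_image, Finset.mem_coe, Finset.mem_product,
      Finset.mem_Icc, Finset.mem_range]
    exact ⟨x, ⟨⟨(hP x hPx).1, (hP x hPx).2⟩, by omega⟩, rfl⟩
  exact Submodule.finiteDimensional_of_le hle

end Basic

section Abstract
open Submodule Module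

variable {V : Type*} [AddCommGroup V] [Module ℂ V]

lemma abs_index (A X Y W : Submodule ℂ V)
    (hcompl : IsCompl X Y) (hXW : X ≤ W) (hAY : A ≤ Y)
    [FiniteDimensional ℂ (W ⊓ Y : Submodule ℂ V)]
    [FiniteDimensional ℂ (Y ⧸ (A.comap Y.subtype))] :
    FiniteDimensional ℂ (A ⊓ W : Submodule ℂ V) ∧ FiniteDimensional ℂ (V ⧸ (A ⊔ W)) ∧
    finrank ℂ (V ⧸ (A ⊔ W)) + finrank ℂ (W ⊓ Y : Submodule ℂ V)
      = finrank ℂ (Y ⧸ (A.comap Y.subtype)) + finrank ℂ (A ⊓ W : Submodule ℂ V) := by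
  have hAW_le : A ⊓ W ≤ W ⊓ Y := le_inf inf_le_right (le_trans inf_le_left hAY)
  haveI fdAW : FiniteDimensional ℂ (A ⊓ W : Submodule ℂ V) :=
    Submodule.finiteDimensional_of_le hAW_le
  set A' : Submodule ℂ Y := A.comap Y.subtype with hA'
  set WY' : Submodule ℂ Y := (W ⊓ Y).comap Y.subtype with hWY'
  -- the map τ
  set τ : (W ⊓ Y : Submodule ℂ V) →ₗ[ℂ] (Y ⧸ A') :=
    A'.mkQ ∘ₗ (Submodule.inclusion inf_le_right) with hτ
  have hkerτ : LinearMap.ker τ = (A ⊓ W).comap (W ⊓ Y).subtype := by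
    ext x
    simp only [hτ, LinearMap.mem_ker, LinearMap.comp_apply, Submodule.mkQ_apply,
      Submodule.Quotient.mk_eq_zero, Submodule.mem_comap, hA', Submodule.mem_inf]
    constructor
    · intro h
      exact ⟨h, x.2.1⟩
    · intro h
      exact h.1
  have hfrk : finrank ℂ (LinearMap.ker τ) = finrank ℂ (A ⊓ W : Submodule ℂ V) := by
    rw [hkerτ]
    exact LinearEquiv.finrank_eq (Submodule.comapSubtypeEquivOfLe hAW_le)
  have hrnull := LinearMap.finrank_range_add_finrank_ker τ
  -- range τ
  have hrange : LinearMap.range τ = WY'.map A'.mkQ := by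
    rw [hτ, LinearMap.range_comp, Submodule.range_inclusion]
  -- the quotient comparison
  set B' : Submodule ℂ Y := A' ⊔ WY' with hB'
  have hW_eq : W = X ⊔ (Y ⊓ W) := by
    have := sup_inf_assoc_of_le (Y : Submodule ℂ V) hXW
    rw [hcompl.sup_eq_top, top_inf_eq] at this
    exact this
  -- ρ : Y → V ⧸ (A ⊔ W)
  set ρ : Y →ₗ[ℂ] (V ⧸ (A ⊔ W)) := (A ⊔ W).mkQ ∘ₗ Y.subtype with hρ
  have hsurjρ : Function.Surjective ρ := by
    intro q
    obtain ⟨v, rfl⟩ := Submodule.mkQ_surjective _ q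
    have hv : v ∈ X ⊔ Y := by rw [hcompl.sup_eq_top]; trivial
    obtain ⟨x, hx, y, hy, rfl⟩ := Submodule.mem_sup.mp hv
    refine ⟨⟨y, hy⟩, ?_⟩
    show Submodule.Quotient.mk y = Submodule.Quotient.mk (x + y)
    rw [Submodule.Quotient.eq]
    have : -x ∈ A ⊔ W := neg_mem (Submodule.mem_sup_right (hXW hx))
    simpa using this
  have hkerρ : LinearMap.ker ρ = B' := by
    have hker0 : LinearMap.ker ρ = (A ⊔ W).comap Y.subtype := by
      rw [hρ, LinearMap.ker_comp, Submodule.ker_mkQ]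
    rw [hker0, hB']
    apply le_antisymm
    · intro x hx
      rw [Submodule.mem_comap] at hx
      rw [hW_eq, ← sup_assoc] at hx
      obtain ⟨aw, haw, w, hw, hxw⟩ := Submodule.mem_sup.mp hx
      obtain ⟨a, ha, xx, hxx, hax⟩ := Submodule.mem_sup.mp haw
      have hxw' : aw + w = (x : V) := by simpa using hxw
      have hwY : w ∈ Y := hw.1
      have hxxY : xx ∈ Y := by
        have : xx = (x : V) - a - w := by rw [← hxw', ← hax]; abel
        rw [this]
        exact sub_mem (sub_mem x.2 (hAY ha)) hwY
      have hxx0 : xx = 0 := by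
        have := hcompl.disjoint
        rw [Submodule.disjoint_def] at this
        exact this xx hxx hxxY
      rw [hxx0, add_zero] at hax
      refine Submodule.mem_sup.mpr ⟨⟨a, hAY ha⟩, ?_, ⟨w, hwY⟩, ?_, ?_⟩
      · simpa [hA'] using ha
      · simp only [hWY', Submodule.mem_comap]
        exact ⟨hw.2, hwY⟩
      · ext
        simp only [Submodule.coe_add]
        rw [hax, hxw']
    · apply sup_le
      · intro x hx
        rw [Submodule.mem_comap] at hx ⊢
        exact Submodule.mem_sup_left hx
      · intro x hx
        rw [Submodule.mem_comap] at hx ⊢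
        exact Submodule.mem_sup_right hx.1
  -- θ : Y ⧸ B' ≃ (Y ⧸ A') ⧸ R
  set R : Submodule ℂ (Y ⧸ A') := LinearMap.range τ with hR
  set θ : Y →ₗ[ℂ] ((Y ⧸ A') ⧸ R) := R.mkQ ∘ₗ A'.mkQ with hθ
  have hsurjθ : Function.Surjective θ :=
    (Submodule.mkQ_surjective R).comp (Submodule.mkQ_surjective A')
  have hkerθ : LinearMap.ker θ = B' := by
    rw [hθ, LinearMap.ker_comp, Submodule.ker_mkQ, hrange,
      Submodule.comap_map_eq, Submodule.ker_mkQ, hB', sup_comm]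
  -- assemble the equivalences
  have e1 : (V ⧸ (A ⊔ W)) ≃ₗ[ℂ] (Y ⧸ B') :=
    ((ρ.quotKerEquivOfSurjective hsurjρ).symm).trans (Submodule.quotEquivOfEq _ _ hkerρ)
  have e2 : (Y ⧸ B') ≃ₗ[ℂ] ((Y ⧸ A') ⧸ R) :=
    ((Submodule.quotEquivOfEq _ _ hkerθ).symm).trans (θ.quotKerEquivOfSurjective hsurjθ)
  have e3 : (V ⧸ (A ⊔ W)) ≃ₗ[ℂ] ((Y ⧸ A') ⧸ R) := e1.trans e2
  haveI : FiniteDimensional ℂ ((Y ⧸ A') ⧸ R) := inferInstance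
  haveI fdH1 : FiniteDimensional ℂ (V ⧸ (A ⊔ W)) := Module.Finite.equiv e3.symm
  refine ⟨fdAW, fdH1, ?_⟩
  have h4 : finrank ℂ (V ⧸ (A ⊔ W)) = finrank ℂ ((Y ⧸ A') ⧸ R) := e3.finrank_eq
  have h5 := Submodule.finrank_quotient_add_finrank R
  omega


variable {V : Type*} [AddCommGroup V] [Module ℂ V]

lemma abs_w_rank (X Y W W' : Submodule ℂ V) (hcompl : IsCompl X Y)
    (hXW : X ≤ W) (hXW' : X ≤ W') (φ : V ≃ₗ[ℂ] V)
    (hφX : X.map (φ : V →ₗ[ℂ] V) = X) (hφW : W.map (φ : V →ₗ[ℂ] V) = W') :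
    finrank ℂ (W ⊓ Y : Submodule ℂ V) = finrank ℂ (W' ⊓ Y : Submodule ℂ V) := by
  have hbot : X.map X.mkQ = ⊥ := by
    rw [← le_bot_iff, Submodule.map_le_iff_le_comap]
    intro x hx
    simp [Submodule.mem_comap, Submodule.Quotient.mk_eq_zero, hx]
  have key : ∀ (U : Submodule ℂ V), X ≤ U →
      finrank ℂ (U ⊓ Y : Submodule ℂ V) = finrank ℂ (U.map X.mkQ) := by
    intro U hXU
    set μ : (U ⊓ Y : Submodule ℂ V) →ₗ[ℂ] (V ⧸ X) := X.mkQ ∘ₗ (U ⊓ Y).subtype with hμ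
    have hinj : Function.Injective μ := by
      rw [← LinearMap.ker_eq_bot, hμ, LinearMap.ker_comp, Submodule.ker_mkQ,
        Submodule.eq_bot_iff]
      rintro x hx
      rw [Submodule.mem_comap] at hx
      have hd := hcompl.disjoint
      rw [Submodule.disjoint_def] at hd
      exact Subtype.ext (hd _ (by simpa using hx) x.2.2)
    have hU : U = X ⊔ (Y ⊓ U) := by
      have := sup_inf_assoc_of_le (Y : Submodule ℂ V) hXU
      rw [hcompl.sup_eq_top, top_inf_eq] at this
      exact this
    have hrange : LinearMap.range μ = U.map X.mkQ := by
      rw [hμ, LinearMap.range_comp, Submodule.range_subtype]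
      conv_rhs => rw [hU]
      rw [Submodule.map_sup, hbot, bot_sup_eq, inf_comm]
    rw [← hrange]
    exact (LinearEquiv.ofInjective μ hinj).finrank_eq
  have hE : (W.map X.mkQ).map ((Submodule.Quotient.equiv X X φ hφX : (V ⧸ X) ≃ₗ[ℂ] (V ⧸ X))
      : (V ⧸ X) →ₗ[ℂ] (V ⧸ X)) = W'.map X.mkQ := by
    rw [← Submodule.map_comp]
    have hcomm : ((Submodule.Quotient.equiv X X φ hφX : (V ⧸ X) ≃ₗ[ℂ] (V ⧸ X))
        : (V ⧸ X) →ₗ[ℂ] (V ⧸ X)) ∘ₗ X.mkQ = X.mkQ ∘ₗ (φ : V →ₗ[ℂ] V) := by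
      ext v
      simp [Submodule.Quotient.equiv_apply]
    rw [hcomm, Submodule.map_comp, hφW]
  rw [key W hXW, key W' hXW', ← hE]
  exact (LinearEquiv.finrank_map_eq (Submodule.Quotient.equiv X X φ hφX) (W.map X.mkQ)).symm

end Abstract

section Main

open Submodule Module

variable (k j m : ℕ)

/-- Upper bound for the `z`-shifts of all multipliers. -/
def Kc : ℤ := (k : ℤ) * m + 2 * j

/-- The staircase cut-offs. -/
def lo (r : ℕ) : ℤ := ((r : ℤ) - (m + 1)) * (Kc k j m + 1)

lemma Kc_nonneg : 0 ≤ Kc k j m := by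
  unfold Kc; positivity

lemma lo_mono {r r' : ℕ} (h : r ≤ r') : lo k j m r ≤ lo k j m r' := by
  unfold lo
  have h1 : (0:ℤ) < Kc k j m + 1 := by have := Kc_nonneg k j m; omega
  have : ((r:ℤ) - (m+1)) ≤ ((r':ℤ) - (m+1)) := by
    have : (r:ℤ) ≤ r' := by exact_mod_cast h
    omega
  exact mul_le_mul_of_nonneg_right this (by omega)

lemma lo_le {r : ℕ} (h : r ≤ m) : lo k j m r ≤ -(Kc k j m + 1) := by
  unfold lo
  have h1 : (0:ℤ) ≤ Kc k j m := Kc_nonneg k j m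
  have h2 : ((r:ℤ) - (m+1)) ≤ -1 := by
    have : (r:ℤ) ≤ m := by exact_mod_cast h
    omega
  nlinarith

lemma lo_succ (r : ℕ) : lo k j m (r + 1) = lo k j m r + (Kc k j m + 1) := by
  unfold lo
  push_cast
  ring

lemma lo_neg {r : ℕ} (h : r ≤ m) : lo k j m r < 0 := by
  have := lo_le k j m h
  have := Kc_nonneg k j m
  omega

/-- Specification for a multiplier: its monomials in `u`-degrees `≤ m` have `z`-exponent
at most `Kc` and `u`-degree at least `d`. -/
def MSpec (q : L) (d : ℕ) : Prop :=
  ∀ a : ℤ × ℕ, q.coeff a ≠ 0 → a.2 ≤ m → a.1 ≤ Kc k j m ∧ d ≤ a.2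

variable {p : L}

lemma zp_mul_apply (e : ℤ) (f : L) (a : ℤ × ℕ) : (zp e * f).coeff a = f.coeff (a.1 - e, a.2) := by
  rw [zp]
  rw [show (1 : ℂ) = 1 from rfl] at *
  have H : ∀ c : ℤ × ℕ, ((e, (0:ℕ)) : ℤ × ℕ) + c = a ↔ c = (a.1 - e, a.2) := by
    intro c
    constructor
    · intro h
      have h1 := congrArg Prod.fst h
      have h2 := congrArg Prod.snd h
      simp only [Prod.fst_add, Prod.snd_add] at h1 h2
      ext
      · simp only [Prod.fst] at h1 ⊢
        omega
      · simp only [Prod.snd] at h2 ⊢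
        omega
    · rintro rfl
      ext
      · simp
      · simp
  rw [AddMonoidAlgebra.coeff_single_mul_eq_mul_coeff _ (fun c _ => H c), one_mul]


lemma hp_bd (hu : ∀ (s : ℤ) (r : ℕ), p.coeff (s, r) ≠ 0 → 1 ≤ r)
    (hpV : VHol k (zp (-(j : ℤ)) * p)) :
    ∀ b : ℤ × ℕ, p.coeff b ≠ 0 → b.1 ≤ (k : ℤ) * b.2 + j ∧ 1 ≤ b.2 := by
  intro b hb
  have h2 : 1 ≤ b.2 := hu b.1 b.2 (by rwa [Prod.mk.eta])
  have hval : (zp (-(j : ℤ)) * p).coeff ((b.1 - j, b.2)) = p.coeff b := by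
    rw [zp_mul_apply]
    norm_num
  have := hpV (b.1 - j) b.2 (by rw [hval]; exact hb)
  exact ⟨by omega, h2⟩

lemma MSpec_zp {e : ℤ} (he : e ≤ Kc k j m) : MSpec k j m (zp e) 0 := by
  intro a ha _
  have : a = (e, 0) := by
    by_contra hne
    exact ha (Finsupp.single_eq_of_ne' (fun h => hne h.symm))
  rw [this]
  exact ⟨he, le_rfl⟩

lemma MSpec_zp_p (hu : ∀ (s : ℤ) (r : ℕ), p.coeff (s, r) ≠ 0 → 1 ≤ r)
    (hpV : VHol k (zp (-(j : ℤ)) * p)) {e : ℤ} (he : -(j:ℤ) ≤ e ∧ e ≤ j) :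
    MSpec k j m (zp e * p) 1 := by
  intro a ha ham
  rw [zp_mul_apply] at ha
  have hbd := hp_bd k j hu hpV _ ha
  simp only at hbd
  have hk2 : (k:ℤ) * a.2 ≤ (k:ℤ) * m := by
    apply mul_le_mul_of_nonneg_left _ (by positivity)
    exact_mod_cast ham
  constructor
  · have := hbd.1
    unfold Kc
    omega
  · exact hbd.2

lemma MSpec_pp (hu : ∀ (s : ℤ) (r : ℕ), p.coeff (s, r) ≠ 0 → 1 ≤ r)
    (hpV : VHol k (zp (-(j : ℤ)) * p)) :
    MSpec k j m (p * p) 1 := by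
  classical
  intro a ha ham
  have hxs : a ∈ (p * p).coeff.support := Finsupp.mem_support_iff.mpr ha
  have := AddMonoidAlgebra.support_coeff_mul_subset p p hxs
  rw [Finset.mem_add] at this
  obtain ⟨b, hb, c, hc, hbc⟩ := this
  have hb' := hp_bd k j hu hpV b (Finsupp.mem_support_iff.mp hb)
  have hc' := hp_bd k j hu hpV c (Finsupp.mem_support_iff.mp hc)
  have h2 : a.2 = b.2 + c.2 := by
    have := congrArg Prod.snd hbc; simpa using this.symm
  have h1 : a.1 = b.1 + c.1 := by
    have := congrArg Prod.fst hbc; simpa using this.symm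
  have hk2 : (k:ℤ) * a.2 ≤ (k:ℤ) * m := by
    apply mul_le_mul_of_nonneg_left _ (by positivity)
    exact_mod_cast ham
  constructor
  · unfold Kc
    have : (k:ℤ) * b.2 + (k:ℤ) * c.2 = (k:ℤ) * a.2 := by rw [h2]; push_cast; ring
    omega
  · omega

end Main

section Spaces

open Submodule Module

variable (k j m : ℕ)

def HolS : Submodule ℂ (Lm m) := suppIn m (fun x => x.1 ≤ (k : ℤ) * x.2)
def AcS : Submodule ℂ (Lm m) := suppIn m (fun x => 0 ≤ x.1)
def SCXS : Submodule ℂ (Lm m) := suppIn m (fun x => x.1 < lo k j m x.2)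
def YcS : Submodule ℂ (Lm m) := suppIn m (fun x => ¬ (x.1 < lo k j m x.2))
def UpperS (t : ℤ) : Submodule ℂ (Lm m) := suppIn m (fun x => x.1 ≤ t)
def MidS : Submodule ℂ (Lm m) := suppIn m (fun x => ¬ (x.1 < lo k j m x.2) ∧ x.1 < 0)
def WndS (t : ℤ) : Submodule ℂ (Lm m) := suppIn m (fun x => ¬ (x.1 < lo k j m x.2) ∧ x.1 ≤ t)

lemma isCompl_XY : IsCompl (SCXS k j m) (YcS k j m) := isCompl_suppIn _

lemma VHolm_iff (f : Lm m) : VHolm k m f ↔ f ∈ HolS k m := by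
  constructor
  · intro h g hg x hx hc
    by_contra hne
    exact hc (h g hg x.1 x.2 hx (by rwa [Prod.mk.eta]))
  · intro h g hg s r hr hne
    by_contra hc
    exact hne (h g hg (s, r) hr hc)

lemma Am_eq : Am m = ↑(AcS m) := by
  classical
  ext f
  constructor
  · rintro ⟨g, hpoly, rfl⟩
    rw [SetLike.mem_coe, AcS, mem_suppIn]
    intro x hx hneg
    by_contra hne
    exact hneg (hpoly x.1 x.2 (by rwa [Prod.mk.eta]))
  · intro hf
    rw [SetLike.mem_coe] at hf
    obtain ⟨g, rfl⟩ := mkm_surjective m f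
    rw [AcS, mem_suppIn] at hf
    refine ⟨AddMonoidAlgebra.ofCoeff (g.coeff.filter (fun x : ℤ × ℕ => 0 ≤ x.1)), ?_, ?_⟩
    · intro s r hne
      rw [AddMonoidAlgebra.coeff_ofCoeff, Finsupp.filter_apply] at hne
      by_cases hc : (0:ℤ) ≤ (( s, r) : ℤ × ℕ).1
      · exact hc
      · rw [if_neg hc] at hne; exact absurd rfl hne
    · rw [mkm_eq_iff]
      intro x hx
      rw [AddMonoidAlgebra.coeff_ofCoeff, Finsupp.filter_apply]
      by_cases hc : (0:ℤ) ≤ x.1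
      · rw [if_pos hc]
      · rw [if_neg hc]
        exact (hf x hx hc).symm

variable {k j m}

lemma SCX_le_Hol : SCXS k j m ≤ HolS k m := by
  apply suppIn_mono
  intro x hx h
  have h1 := lo_le k j m (le_refl m)
  have h2 := lo_mono k j m (le_of_lt (Nat.lt_succ_of_le hx))
  have := lo_le k j m hx
  have := Kc_nonneg k j m
  have : (0:ℤ) ≤ (k : ℤ) * x.2 := by positivity
  omega

lemma Ac_le_Yc : AcS m ≤ YcS k j m := by
  apply suppIn_mono
  intro x hx h
  have := lo_neg k j m hx
  omega

lemma Hol_le_Upper : HolS k m ≤ UpperS m ((k:ℤ) * m) := by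
  apply suppIn_mono
  intro x hx h
  have : (k:ℤ) * x.2 ≤ (k:ℤ) * m := by
    apply mul_le_mul_of_nonneg_left _ (by positivity)
    exact_mod_cast hx
  omega

lemma Upper_mono {t t' : ℤ} (h : t ≤ t') : UpperS m t ≤ UpperS m t' := by
  apply suppIn_mono
  intro x _ hx
  omega

lemma mul_Hol {q : L} {d : ℕ} (hq : MSpec k j m q d) {f : Lm m} (hf : f ∈ SCXS k j m) :
    mkm m q * f ∈ HolS k m := by
  refine suppIn_mul_mem hq ?_ hf
  intro a b ha hd hb hab hPb
  have h1 := lo_le k j m hb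
  have h2 : (0:ℤ) ≤ (k : ℤ) * (a+b).2 := by positivity
  have e1 : (a+b).1 = a.1 + b.1 := rfl
  omega

lemma mul_SCX {q : L} (hq : MSpec k j m q 1) {f : Lm m} (hf : f ∈ SCXS k j m) :
    mkm m q * f ∈ SCXS k j m := by
  refine suppIn_mul_mem hq ?_ hf
  intro a b ha hd hb hab hPb
  have h1 : lo k j m (b.2 + 1) ≤ lo k j m (a + b).2 := by
    apply lo_mono
    have : (a+b).2 = a.2 + b.2 := rfl
    omega
  rw [lo_succ] at h1
  have e1 : (a+b).1 = a.1 + b.1 := rfl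
  omega

lemma mul_Upper {q : L} {d : ℕ} (hq : MSpec k j m q d) {t t' : ℤ}
    (ht : Kc k j m + t ≤ t') {f : Lm m} (hf : f ∈ UpperS m t) :
    mkm m q * f ∈ UpperS m t' := by
  refine suppIn_mul_mem hq ?_ hf
  intro a b ha hd hb hab hPb
  have : (a+b).1 = a.1 + b.1 := rfl
  omega

lemma Yc_inf_Upper_le {t : ℤ} : YcS k j m ⊓ UpperS m t ≤ WndS k j m t := by
  refine le_trans suppIn_inf_le ?_
  apply suppIn_mono
  intro x _ hx
  exact hx

lemma fd_WndS (t : ℤ) : FiniteDimensional ℂ (WndS k j m t) := by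
  apply finiteDimensional_suppIn (lo0 := lo k j m 0) (Hi := t)
  intro x hx
  have := lo_mono k j m (Nat.zero_le x.2)
  omega

lemma fd_MidS : FiniteDimensional ℂ (MidS k j m) := by
  apply finiteDimensional_suppIn (lo0 := lo k j m 0) (Hi := 0)
  intro x hx
  have := lo_mono k j m (Nat.zero_le x.2)
  omega

lemma Mid_le_Yc : MidS k j m ≤ YcS k j m := by
  apply suppIn_mono
  intro x _ hx
  exact hx.1

/-- Decomposition of an element of `Yc` into a `Mid` part and an `Ac` part. -/
lemma Yc_decomp {f : Lm m} (hf : f ∈ YcS k j m) :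
    ∃ z ∈ MidS k j m, f - z ∈ AcS m := by
  classical
  obtain ⟨g, rfl⟩ := mkm_surjective m f
  rw [YcS, mem_suppIn] at hf
  refine ⟨mkm m (AddMonoidAlgebra.ofCoeff (g.coeff.filter (fun x : ℤ × ℕ => x.1 < 0))), ?_, ?_⟩
  · rw [MidS, mem_suppIn]
    intro x hx hc
    rw [AddMonoidAlgebra.coeff_ofCoeff, Finsupp.filter_apply]
    by_cases h0 : x.1 < 0
    · rw [if_pos h0]
      by_cases hlo : x.1 < lo k j m x.2
      · exact hf x hx (not_not_intro hlo)
      · exact absurd ⟨hlo, h0⟩ hc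
    · rw [if_neg h0]
  · rw [← map_sub, AcS, mem_suppIn]
    intro x hx hc
    rw [AddMonoidAlgebra.coeff_sub, Finsupp.sub_apply, AddMonoidAlgebra.coeff_ofCoeff, Finsupp.filter_apply, if_pos (by omega), sub_self]

end Spaces

section QuadLevel

open Submodule Module

variable (m : ℕ)

def P4 (S : Submodule ℂ (Lm m)) : Submodule ℂ (Q4 m) := S.prod (S.prod (S.prod S))

lemma mem_P4 {S : Submodule ℂ (Lm m)} {σ : Q4 m} :
    σ ∈ P4 m S ↔ σ.1 ∈ S ∧ σ.2.1 ∈ S ∧ σ.2.2.1 ∈ S ∧ σ.2.2.2 ∈ S := by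
  simp [P4, Submodule.mem_prod]

lemma isCompl_P4 {S T : Submodule ℂ (Lm m)} (h : IsCompl S T) :
    IsCompl (P4 m S) (P4 m T) := by
  constructor
  · rw [_root_.disjoint_iff]
    rw [P4, P4, Submodule.prod_inf_prod, Submodule.prod_inf_prod, Submodule.prod_inf_prod,
      h.inf_eq_bot]
    simp [Submodule.prod_bot]
  · rw [codisjoint_iff]
    rw [P4, P4, Submodule.prod_sup_prod, Submodule.prod_sup_prod, Submodule.prod_sup_prod,
      h.sup_eq_top]
    simp [Submodule.prod_top]

lemma fd_P4 {S : Submodule ℂ (Lm m)} [FiniteDimensional ℂ S] :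
    FiniteDimensional ℂ (P4 m S) := by
  set ι : (S × S × S × S) →ₗ[ℂ] Q4 m :=
    (S.subtype).prodMap ((S.subtype).prodMap ((S.subtype).prodMap S.subtype)) with hι
  have hle : P4 m S ≤ LinearMap.range ι := by
    rintro ⟨a, b, c, d⟩ h
    rw [mem_P4] at h
    exact ⟨(⟨a, h.1⟩, ⟨b, h.2.1⟩, ⟨c, h.2.2.1⟩, ⟨d, h.2.2.2⟩), rfl⟩
  exact Submodule.finiteDimensional_of_le hle

end QuadLevel

section Maps

open Submodule Module

variable (m : ℕ)

def mulc (q : L) : Lm m →ₗ[ℂ] Lm m := LinearMap.mulLeft ℂ (mkm m q)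

def pr1 : Q4 m →ₗ[ℂ] Lm m := LinearMap.fst ℂ (Lm m) (Lm m × Lm m × Lm m)
def pr2 : Q4 m →ₗ[ℂ] Lm m :=
  (LinearMap.fst ℂ (Lm m) (Lm m × Lm m)).comp (LinearMap.snd ℂ (Lm m) (Lm m × Lm m × Lm m))
def pr3 : Q4 m →ₗ[ℂ] Lm m :=
  (LinearMap.fst ℂ (Lm m) (Lm m)).comp ((LinearMap.snd ℂ (Lm m) (Lm m × Lm m)).comp
    (LinearMap.snd ℂ (Lm m) (Lm m × Lm m × Lm m)))
def pr4 : Q4 m →ₗ[ℂ] Lm m :=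
  (LinearMap.snd ℂ (Lm m) (Lm m)).comp ((LinearMap.snd ℂ (Lm m) (Lm m × Lm m)).comp
    (LinearMap.snd ℂ (Lm m) (Lm m × Lm m × Lm m)))

@[simp] lemma mulc_apply (q : L) (f : Lm m) : mulc m q f = mkm m q * f := rfl
@[simp] lemma pr1_apply (σ : Q4 m) : pr1 m σ = σ.1 := rfl
@[simp] lemma pr2_apply (σ : Q4 m) : pr2 m σ = σ.2.1 := rfl
@[simp] lemma pr3_apply (σ : Q4 m) : pr3 m σ = σ.2.2.1 := rfl
@[simp] lemma pr4_apply (σ : Q4 m) : pr4 m σ = σ.2.2.2 := rfl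

variable (k j : ℕ) (p : L)

/-- The transition transform `S_p` as a linear map. -/
def Sl : Q4 m →ₗ[ℂ] Q4 m :=
  (pr1 m + (mulc m (zp (j : ℤ) * p)).comp (pr2 m) + (mulc m (zp (-(j:ℤ)) * p)).comp (pr3 m)
      + (mulc m (p * p)).comp (pr4 m)).prod
  ((((mulc m (zp (2 * (j:ℤ)))).comp (pr2 m)) + (mulc m (zp (j:ℤ) * p)).comp (pr4 m)).prod
  ((((mulc m (zp (-(2 * (j:ℤ))))).comp (pr3 m)) + (mulc m (zp (-(j:ℤ)) * p)).comp (pr4 m)).prod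
    (pr4 m)))

lemma Sl_apply (σ : Q4 m) :
    Sl m j p σ =
      (σ.1 + mkm m (zp (j : ℤ) * p) * σ.2.1
          + mkm m (zp (-(j : ℤ)) * p) * σ.2.2.1 + mkm m (p * p) * σ.2.2.2,
       mkm m (zp (2 * (j : ℤ))) * σ.2.1 + mkm m (zp (j : ℤ) * p) * σ.2.2.2,
       mkm m (zp (-(2 * (j : ℤ)))) * σ.2.2.1 + mkm m (zp (-(j : ℤ)) * p) * σ.2.2.2,
       σ.2.2.2) := by
  simp [Sl, LinearMap.prod_apply, LinearMap.add_apply, LinearMap.comp_apply]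

/-- The unipotent coordinate change `ψ` with `S_p = S_0 ∘ ψ`. -/
def psil : Q4 m →ₗ[ℂ] Q4 m :=
  (pr1 m + (mulc m (zp (j : ℤ) * p)).comp (pr2 m) + (mulc m (zp (-(j:ℤ)) * p)).comp (pr3 m)
      + (mulc m (p * p)).comp (pr4 m)).prod
  (((pr2 m) + (mulc m (zp (-(j:ℤ)) * p)).comp (pr4 m)).prod
  ((((pr3 m) + (mulc m (zp (j:ℤ) * p)).comp (pr4 m))).prod (pr4 m)))

/-- Its inverse `φ`. -/
def phil : Q4 m →ₗ[ℂ] Q4 m :=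
  (pr1 m - (mulc m (zp (j : ℤ) * p)).comp (pr2 m) - (mulc m (zp (-(j:ℤ)) * p)).comp (pr3 m)
      + (mulc m (p * p)).comp (pr4 m)).prod
  (((pr2 m) - (mulc m (zp (-(j:ℤ)) * p)).comp (pr4 m)).prod
  ((((pr3 m) - (mulc m (zp (j:ℤ) * p)).comp (pr4 m))).prod (pr4 m)))

lemma psil_apply (σ : Q4 m) :
    psil m j p σ =
      (σ.1 + mkm m (zp (j : ℤ) * p) * σ.2.1
          + mkm m (zp (-(j : ℤ)) * p) * σ.2.2.1 + mkm m (p * p) * σ.2.2.2,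
       σ.2.1 + mkm m (zp (-(j : ℤ)) * p) * σ.2.2.2,
       σ.2.2.1 + mkm m (zp (j : ℤ) * p) * σ.2.2.2,
       σ.2.2.2) := by
  simp [psil, LinearMap.prod_apply, LinearMap.add_apply, LinearMap.comp_apply]

lemma phil_apply (σ : Q4 m) :
    phil m j p σ =
      (σ.1 - mkm m (zp (j : ℤ) * p) * σ.2.1
          - mkm m (zp (-(j : ℤ)) * p) * σ.2.2.1 + mkm m (p * p) * σ.2.2.2,
       σ.2.1 - mkm m (zp (-(j : ℤ)) * p) * σ.2.2.2,
       σ.2.2.1 - mkm m (zp (j : ℤ) * p) * σ.2.2.2,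
       σ.2.2.2) := by
  simp [phil, LinearMap.prod_apply, LinearMap.add_apply, LinearMap.sub_apply,
    LinearMap.comp_apply]

lemma hq12 : mkm m (zp (j:ℤ) * p) * mkm m (zp (-(j:ℤ)) * p) = mkm m (p * p) := by
  rw [← map_mul]
  congr 1
  calc (zp (j:ℤ) * p) * (zp (-(j:ℤ)) * p) = (zp (j:ℤ) * zp (-(j:ℤ))) * (p * p) := by ring
  _ = p * p := by rw [zp_mul_zp, add_neg_cancel, zp_zero, one_mul]

lemma phil_psil : (phil m j p).comp (psil m j p) = LinearMap.id := by
  apply LinearMap.ext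
  intro σ
  have h12 := hq12 m j p
  rw [LinearMap.comp_apply, psil_apply, phil_apply, LinearMap.id_apply]
  obtain ⟨a, b, c, d⟩ := σ
  set A := mkm m (zp (j:ℤ) * p) with hA
  set B := mkm m (zp (-(j:ℤ)) * p) with hB
  set C := mkm m (p * p) with hC
  refine Prod.ext ?_ (Prod.ext ?_ (Prod.ext ?_ rfl))
  · simp only []
    linear_combination (-2 * d) * h12
  · simp only []
    ring
  · simp only []
    ring

lemma psil_phil : (psil m j p).comp (phil m j p) = LinearMap.id := by
  apply LinearMap.ext
  intro σ
  have h12 := hq12 m j p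
  rw [LinearMap.comp_apply, phil_apply, psil_apply, LinearMap.id_apply]
  obtain ⟨a, b, c, d⟩ := σ
  set A := mkm m (zp (j:ℤ) * p) with hA
  set B := mkm m (zp (-(j:ℤ)) * p) with hB
  set C := mkm m (p * p) with hC
  refine Prod.ext ?_ (Prod.ext ?_ (Prod.ext ?_ rfl))
  · simp only []
    linear_combination (-2 * d) * h12
  · simp only []
    ring
  · simp only []
    ring

/-- `ψ` as a linear equivalence (with inverse `φ`). -/
def phie : Q4 m ≃ₗ[ℂ] Q4 m :=
  LinearEquiv.ofLinear (phil m j p) (psil m j p) (phil_psil m j p) (psil_phil m j p)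

lemma Sl_comp : (Sl m j 0).comp (psil m j p) = Sl m j p := by
  apply LinearMap.ext
  intro σ
  rw [LinearMap.comp_apply, Sl_apply, psil_apply, Sl_apply]
  have e2 : mkm m (zp (2 * (j:ℤ))) * mkm m (zp (-(j:ℤ)) * p) = mkm m (zp (j:ℤ) * p) := by
    rw [← map_mul]
    congr 1
    rw [← mul_assoc, zp_mul_zp]
    have he : 2 * (j:ℤ) + -(j:ℤ) = (j:ℤ) := by ring
    rw [he]
  have e3 : mkm m (zp (-(2 * (j:ℤ)))) * mkm m (zp (j:ℤ) * p) = mkm m (zp (-(j:ℤ)) * p) := by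
    rw [← map_mul]
    congr 1
    rw [← mul_assoc, zp_mul_zp]
    have he : -(2 * (j:ℤ)) + (j:ℤ) = -(j:ℤ) := by ring
    rw [he]
  obtain ⟨a, b, c, d⟩ := σ
  simp only [mul_zero, zero_mul, map_zero, add_zero, zero_add]
  refine Prod.ext rfl (Prod.ext ?_ (Prod.ext ?_ rfl))
  · simp only [mul_add, ← mul_assoc]
    rw [e2]
  · simp only [mul_add, ← mul_assoc]
    rw [e3]

end Maps

section WSpace

open Submodule Module

variable (k j m : ℕ) (p : L)

def Wq : Submodule ℂ (Q4 m) := (P4 m (HolS k m)).comap (Sl m j p)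

lemma Wm_eq : Wm k j m p = ↑(Wq k j m p) := by
  ext σ
  simp only [Wm, Set.mem_setOf_eq, SetLike.mem_coe, Wq, Submodule.mem_comap, mem_P4,
    Sl_apply, VHolm_iff]

lemma Am4_eq : Am4 m = ↑(P4 m (AcS m)) := by
  ext σ
  simp only [Am4, Set.mem_setOf_eq, SetLike.mem_coe, mem_P4, Am_eq m, SetLike.mem_coe]

lemma P4_mono {S T : Submodule ℂ (Lm m)} (h : S ≤ T) : P4 m S ≤ P4 m T :=
  Submodule.prod_mono h (Submodule.prod_mono h (Submodule.prod_mono h h))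

variable {k j m p}

lemma two_j_le_Kc : 2 * (j:ℤ) ≤ Kc k j m := by
  have h : (0:ℤ) ≤ (k:ℤ) * m := by positivity
  unfold Kc
  linarith

lemma neg_two_j_le_Kc : -(2 * (j:ℤ)) ≤ Kc k j m := by
  have h : (0:ℤ) ≤ (k:ℤ) * m := by positivity
  have : (0:ℤ) ≤ (j:ℤ) := by positivity
  unfold Kc
  linarith

lemma he_j : -(j:ℤ) ≤ (j:ℤ) ∧ (j:ℤ) ≤ (j:ℤ) := ⟨neg_le_self (by positivity), le_rfl⟩
lemma he_nj : -(j:ℤ) ≤ -(j:ℤ) ∧ -(j:ℤ) ≤ (j:ℤ) := ⟨le_rfl, neg_le_self (by positivity)⟩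

variable (hu : ∀ (s : ℤ) (r : ℕ), p.coeff (s, r) ≠ 0 → 1 ≤ r)
variable (hpV : VHol k (zp (-(j : ℤ)) * p))

include hu hpV in
lemma X_le_W : P4 m (SCXS k j m) ≤ Wq k j m p := by
  intro σ hσ
  rw [mem_P4] at hσ
  obtain ⟨h1, h2, h3, h4⟩ := hσ
  rw [Wq, Submodule.mem_comap, mem_P4, Sl_apply]
  refine ⟨?_, ?_, ?_, SCX_le_Hol h4⟩
  · exact add_mem (add_mem (add_mem (SCX_le_Hol h1)
      (mul_Hol (MSpec_zp_p k j m hu hpV he_j) h2))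
      (mul_Hol (MSpec_zp_p k j m hu hpV he_nj) h3))
      (mul_Hol (MSpec_pp k j m hu hpV) h4)
  · exact add_mem (mul_Hol (MSpec_zp k j m two_j_le_Kc) h2)
      (mul_Hol (MSpec_zp_p k j m hu hpV he_j) h4)
  · exact add_mem (mul_Hol (MSpec_zp k j m neg_two_j_le_Kc) h3)
      (mul_Hol (MSpec_zp_p k j m hu hpV he_nj) h4)

include hu hpV in
lemma phil_X : ∀ σ ∈ P4 m (SCXS k j m), phil m j p σ ∈ P4 m (SCXS k j m) := by
  intro σ hσ
  rw [mem_P4] at hσ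
  obtain ⟨h1, h2, h3, h4⟩ := hσ
  rw [phil_apply, mem_P4]
  exact ⟨add_mem (sub_mem (sub_mem h1 (mul_SCX (MSpec_zp_p k j m hu hpV he_j) h2))
      (mul_SCX (MSpec_zp_p k j m hu hpV he_nj) h3)) (mul_SCX (MSpec_pp k j m hu hpV) h4),
    sub_mem h2 (mul_SCX (MSpec_zp_p k j m hu hpV he_nj) h4),
    sub_mem h3 (mul_SCX (MSpec_zp_p k j m hu hpV he_j) h4), h4⟩

include hu hpV in
lemma psil_X : ∀ σ ∈ P4 m (SCXS k j m), psil m j p σ ∈ P4 m (SCXS k j m) := by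
  intro σ hσ
  rw [mem_P4] at hσ
  obtain ⟨h1, h2, h3, h4⟩ := hσ
  rw [psil_apply, mem_P4]
  exact ⟨add_mem (add_mem (add_mem h1 (mul_SCX (MSpec_zp_p k j m hu hpV he_j) h2))
      (mul_SCX (MSpec_zp_p k j m hu hpV he_nj) h3)) (mul_SCX (MSpec_pp k j m hu hpV) h4),
    add_mem h2 (mul_SCX (MSpec_zp_p k j m hu hpV he_nj) h4),
    add_mem h3 (mul_SCX (MSpec_zp_p k j m hu hpV he_j) h4), h4⟩

include hu hpV in
lemma map_phie_X :
    (P4 m (SCXS k j m)).map ((phie m j p : Q4 m ≃ₗ[ℂ] Q4 m) : Q4 m →ₗ[ℂ] Q4 m)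
      = P4 m (SCXS k j m) := by
  apply le_antisymm
  · rintro σ ⟨τ, hτ, rfl⟩
    have : ((phie m j p : Q4 m ≃ₗ[ℂ] Q4 m) : Q4 m →ₗ[ℂ] Q4 m) τ = phil m j p τ := by
      simp [phie, LinearEquiv.ofLinear_apply]
    rw [this]
    exact phil_X hu hpV τ hτ
  · intro σ hσ
    refine ⟨psil m j p σ, psil_X hu hpV σ hσ, ?_⟩
    have h := LinearMap.ext_iff.mp (phil_psil m j p) σ
    simpa [phie, LinearEquiv.ofLinear_apply] using h

omit hu hpV in
lemma map_phie_W :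
    (Wq k j m 0).map ((phie m j p : Q4 m ≃ₗ[ℂ] Q4 m) : Q4 m →ₗ[ℂ] Q4 m)
      = Wq k j m p := by
  have hcomp : ∀ σ : Q4 m, Sl m j 0 (psil m j p σ) = Sl m j p σ :=
    fun σ => LinearMap.ext_iff.mp (Sl_comp m j p) σ
  apply le_antisymm
  · rintro σ ⟨τ, hτ, rfl⟩
    have h1 : ((phie m j p : Q4 m ≃ₗ[ℂ] Q4 m) : Q4 m →ₗ[ℂ] Q4 m) τ = phil m j p τ := by
      simp [phie, LinearEquiv.ofLinear_apply]
    rw [h1, Wq, Submodule.mem_comap]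
    have h2 : Sl m j p (phil m j p τ) = Sl m j 0 τ := by
      rw [← hcomp (phil m j p τ)]
      congr 1
      exact LinearMap.ext_iff.mp (psil_phil m j p) τ
    rw [h2]
    exact hτ
  · intro σ hσ
    refine ⟨psil m j p σ, ?_, ?_⟩
    · show psil m j p σ ∈ Wq k j m 0
      rw [Wq, Submodule.mem_comap, hcomp σ]
      exact hσ
    · have h := LinearMap.ext_iff.mp (phil_psil m j p) σ
      simpa [phie, LinearEquiv.ofLinear_apply] using h

include hu hpV in
lemma W_inf_Y_le_Wnd :
    Wq k j m p ⊓ P4 m (YcS k j m) ≤ P4 m (WndS k j m (2 * Kc k j m + (k:ℤ) * m)) := by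
  intro σ hσ
  rw [Submodule.mem_inf] at hσ
  obtain ⟨hW, hY⟩ := hσ
  rw [Wq, Submodule.mem_comap, mem_P4, Sl_apply] at hW
  obtain ⟨hE1, hE2, hE3, hd⟩ := hW
  rw [mem_P4] at hY ⊢
  obtain ⟨hY1, hY2, hY3, hY4⟩ := hY
  set t0 : ℤ := (k:ℤ) * m with ht0
  have hKc := Kc_nonneg k j m
  have hdU : σ.2.2.2 ∈ UpperS m t0 := Hol_le_Upper hd
  have hE2U := Hol_le_Upper hE2
  have hE3U := Hol_le_Upper hE3
  have hE1U := Hol_le_Upper hE1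
  -- b bound
  have hbid : σ.2.1 = mkm m (zp (-(2*(j:ℤ)))) *
      (mkm m (zp (2 * (j:ℤ))) * σ.2.1 + mkm m (zp (j:ℤ) * p) * σ.2.2.2)
      - mkm m (zp (-(j:ℤ)) * p) * σ.2.2.2 := by
    have h1 : zp (-(2*(j:ℤ))) * (zp (j:ℤ) * p) = zp (-(j:ℤ)) * p := by
      rw [← mul_assoc, zp_mul_zp]
      have : -(2 * (j:ℤ)) + (j:ℤ) = -(j:ℤ) := by ring
      rw [this]
    have h0 : -(2*(j:ℤ)) + 2 * (j:ℤ) = 0 := by ring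
    rw [mul_add, ← mul_assoc, ← map_mul, zp_mul_zp, h0, zp_zero, map_one, one_mul,
      ← mul_assoc, ← map_mul, h1]
    ring
  have hbU : σ.2.1 ∈ UpperS m (Kc k j m + t0) := by
    rw [hbid]
    exact sub_mem (mul_Upper (MSpec_zp k j m neg_two_j_le_Kc) le_rfl hE2U)
      (mul_Upper (MSpec_zp_p k j m hu hpV he_nj) le_rfl hdU)
  -- c bound
  have hcid : σ.2.2.1 = mkm m (zp (2*(j:ℤ))) *
      (mkm m (zp (-(2 * (j:ℤ)))) * σ.2.2.1 + mkm m (zp (-(j:ℤ)) * p) * σ.2.2.2)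
      - mkm m (zp (j:ℤ) * p) * σ.2.2.2 := by
    have h1 : zp (2*(j:ℤ)) * (zp (-(j:ℤ)) * p) = zp (j:ℤ) * p := by
      rw [← mul_assoc, zp_mul_zp]
      have : 2 * (j:ℤ) + -(j:ℤ) = (j:ℤ) := by ring
      rw [this]
    have h0 : 2*(j:ℤ) + -(2 * (j:ℤ)) = 0 := by ring
    rw [mul_add, ← mul_assoc, ← map_mul, zp_mul_zp, h0, zp_zero, map_one, one_mul,
      ← mul_assoc, ← map_mul, h1]
    ring
  have hcU : σ.2.2.1 ∈ UpperS m (Kc k j m + t0) := by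
    rw [hcid]
    exact sub_mem (mul_Upper (MSpec_zp k j m two_j_le_Kc) le_rfl hE3U)
      (mul_Upper (MSpec_zp_p k j m hu hpV he_j) le_rfl hdU)
  -- a bound
  have haid : σ.1 = (σ.1 + mkm m (zp (j : ℤ) * p) * σ.2.1
      + mkm m (zp (-(j : ℤ)) * p) * σ.2.2.1 + mkm m (p * p) * σ.2.2.2)
      - mkm m (zp (j:ℤ) * p) * σ.2.1 - mkm m (zp (-(j:ℤ)) * p) * σ.2.2.1
      - mkm m (p * p) * σ.2.2.2 := by ring
  have haU : σ.1 ∈ UpperS m (2 * Kc k j m + t0) := by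
    rw [haid]
    refine sub_mem (sub_mem (sub_mem (Upper_mono (by omega) hE1U) ?_) ?_) ?_
    · exact mul_Upper (MSpec_zp_p k j m hu hpV he_j) (by omega) hbU
    · exact mul_Upper (MSpec_zp_p k j m hu hpV he_nj) (by omega) hcU
    · exact mul_Upper (MSpec_pp k j m hu hpV) (by omega) hdU
  refine ⟨Yc_inf_Upper_le ⟨hY1, haU⟩, Yc_inf_Upper_le ⟨hY2, Upper_mono (by omega) hbU⟩,
    Yc_inf_Upper_le ⟨hY3, Upper_mono (by omega) hcU⟩,
    Yc_inf_Upper_le ⟨hY4, Upper_mono (by omega) hdU⟩⟩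

end WSpace


set_option maxHeartbeats 1600000 in
/-- For `p ∈ L` divisible by `u` with `z⁻ʲp` V-holomorphic, the spaces
`H⁰_m(p)` and `H¹_m(p)` are finite-dimensional, and for every `m` the Euler characteristic
`dim H¹_m(p) − dim H⁰_m(p)` equals the one of the split bundle, `dim H¹_m(0) − dim H⁰_m(0)`. -/
theorem endE_euler_char_eq_split (k : ℕ) (hk : 1 ≤ k) (j : ℕ) (p : L)
    (hu : ∀ (s : ℤ) (r : ℕ), p.coeff (s, r) ≠ 0 → 1 ≤ r)
    (hpV : VHol k (zp (-(j : ℤ)) * p)) (m : ℕ) :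
    FiniteDimensional ℂ (H0m k j m p) ∧ FiniteDimensional ℂ (H1m k j m p) ∧
    FiniteDimensional ℂ (H0m k j m 0) ∧ FiniteDimensional ℂ (H1m k j m 0) ∧
    (Module.finrank ℂ (H1m k j m p) : ℤ) - Module.finrank ℂ (H0m k j m p)
      = (Module.finrank ℂ (H1m k j m 0) : ℤ) - Module.finrank ℂ (H0m k j m 0) := by
  classical
  have hu0 : ∀ (s : ℤ) (r : ℕ), (0 : L).coeff (s, r) ≠ 0 → 1 ≤ r := by
    intro s r h
    simp at h
  have hpV0 : VHol k (zp (-(j : ℤ)) * 0) := by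
    intro s r h
    rw [mul_zero] at h
    simp at h
  have hcompl : IsCompl (P4 m (SCXS k j m)) (P4 m (YcS k j m)) :=
    isCompl_P4 m (isCompl_XY k j m)
  have hXWp : P4 m (SCXS k j m) ≤ Wq k j m p := X_le_W hu hpV
  have hXW0 : P4 m (SCXS k j m) ≤ Wq k j m 0 := X_le_W hu0 hpV0
  have hAY : P4 m (AcS m) ≤ P4 m (YcS k j m) := P4_mono m Ac_le_Yc
  haveI hfdWnd : FiniteDimensional ℂ (WndS k j m (2 * Kc k j m + (k:ℤ) * m)) := fd_WndS _
  haveI hfdWnd4 : FiniteDimensional ℂ (P4 m (WndS k j m (2 * Kc k j m + (k:ℤ) * m))) :=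
    fd_P4 m
  haveI fdWp : FiniteDimensional ℂ ↥(Wq k j m p ⊓ P4 m (YcS k j m)) :=
    Submodule.finiteDimensional_of_le (W_inf_Y_le_Wnd hu hpV)
  haveI fdW0 : FiniteDimensional ℂ ↥(Wq k j m 0 ⊓ P4 m (YcS k j m)) :=
    Submodule.finiteDimensional_of_le (W_inf_Y_le_Wnd hu0 hpV0)
  haveI fdQuot : FiniteDimensional ℂ
      (↥(P4 m (YcS k j m)) ⧸ ((P4 m (AcS m)).comap (P4 m (YcS k j m)).subtype)) := by
    haveI : FiniteDimensional ℂ (MidS k j m) := fd_MidS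
    haveI : FiniteDimensional ℂ (P4 m (MidS k j m)) := fd_P4 m
    have hMidY : P4 m (MidS k j m) ≤ P4 m (YcS k j m) := P4_mono m Mid_le_Yc
    apply Module.Finite.of_surjective
      (((P4 m (AcS m)).comap (P4 m (YcS k j m)).subtype).mkQ ∘ₗ Submodule.inclusion hMidY)
    intro q
    obtain ⟨y, rfl⟩ := Submodule.mkQ_surjective _ q
    have hy : (y : Q4 m) ∈ P4 m (YcS k j m) := y.2
    rw [mem_P4] at hy
    obtain ⟨z1, hz1, ha1⟩ := Yc_decomp hy.1
    obtain ⟨z2, hz2, ha2⟩ := Yc_decomp hy.2.1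
    obtain ⟨z3, hz3, ha3⟩ := Yc_decomp hy.2.2.1
    obtain ⟨z4, hz4, ha4⟩ := Yc_decomp hy.2.2.2
    have hzmem : ((z1, z2, z3, z4) : Q4 m) ∈ P4 m (MidS k j m) :=
      (mem_P4 m).mpr ⟨hz1, hz2, hz3, hz4⟩
    refine ⟨⟨(z1, z2, z3, z4), hzmem⟩, ?_⟩
    simp only [LinearMap.comp_apply, Submodule.mkQ_apply]
    rw [Submodule.Quotient.eq, Submodule.mem_comap]
    have hco : (((Submodule.inclusion hMidY) ⟨(z1, z2, z3, z4), hzmem⟩ - y :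
        P4 m (YcS k j m)) : Q4 m) = ((z1, z2, z3, z4) : Q4 m) - (y : Q4 m) := rfl
    rw [Submodule.subtype_apply, hco, mem_P4]
    refine ⟨?_, ?_, ?_, ?_⟩
    · have : (((z1, z2, z3, z4) : Q4 m) - (y : Q4 m)).1 = -((y : Q4 m).1 - z1) := by
        simp [Prod.fst_sub]
      rw [this]; exact neg_mem ha1
    · have : (((z1, z2, z3, z4) : Q4 m) - (y : Q4 m)).2.1 = -((y : Q4 m).2.1 - z2) := by
        simp
      rw [this]; exact neg_mem ha2
    · have : (((z1, z2, z3, z4) : Q4 m) - (y : Q4 m)).2.2.1 = -((y : Q4 m).2.2.1 - z3) := by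
        simp
      rw [this]; exact neg_mem ha3
    · have : (((z1, z2, z3, z4) : Q4 m) - (y : Q4 m)).2.2.2 = -((y : Q4 m).2.2.2 - z4) := by
        simp
      rw [this]; exact neg_mem ha4
  obtain ⟨fd0p, fd1p, heqp⟩ :=
    abs_index (P4 m (AcS m)) (P4 m (SCXS k j m)) (P4 m (YcS k j m)) (Wq k j m p)
      hcompl hXWp hAY
  obtain ⟨fd00, fd10, heq0⟩ :=
    abs_index (P4 m (AcS m)) (P4 m (SCXS k j m)) (P4 m (YcS k j m)) (Wq k j m 0)
      hcompl hXW0 hAY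
  have hRW : Module.finrank ℂ ↥(Wq k j m 0 ⊓ P4 m (YcS k j m))
      = Module.finrank ℂ ↥(Wq k j m p ⊓ P4 m (YcS k j m)) :=
    abs_w_rank (P4 m (SCXS k j m)) (P4 m (YcS k j m)) (Wq k j m 0) (Wq k j m p)
      hcompl hXW0 hXWp (phie m j p) (map_phie_X hu hpV) map_phie_W
  have hH0p : H0m k j m p = P4 m (AcS m) ⊓ Wq k j m p := by
    unfold H0m
    rw [Am4_eq, Wm_eq, ← Submodule.coe_inf, Submodule.span_eq]
  have hH00 : H0m k j m 0 = P4 m (AcS m) ⊓ Wq k j m 0 := by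
    unfold H0m
    rw [Am4_eq, Wm_eq, ← Submodule.coe_inf, Submodule.span_eq]
  have hsp : Submodule.span ℂ (Am4 m ∪ Wm k j m p) = P4 m (AcS m) ⊔ Wq k j m p := by
    rw [Am4_eq, Wm_eq, Submodule.span_union, Submodule.span_eq, Submodule.span_eq]
  have hs0 : Submodule.span ℂ (Am4 m ∪ Wm k j m 0) = P4 m (AcS m) ⊔ Wq k j m 0 := by
    rw [Am4_eq, Wm_eq, Submodule.span_union, Submodule.span_eq, Submodule.span_eq]
  refine ⟨?_, ?_, ?_, ?_, ?_⟩
  · rw [hH0p]; exact fd0p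
  · show FiniteDimensional ℂ (Q4 m ⧸ Submodule.span ℂ (Am4 m ∪ Wm k j m p))
    rw [hsp]; exact fd1p
  · rw [hH00]; exact fd00
  · show FiniteDimensional ℂ (Q4 m ⧸ Submodule.span ℂ (Am4 m ∪ Wm k j m 0))
    rw [hs0]; exact fd10
  · have e1 : Module.finrank ℂ (H1m k j m p)
        = Module.finrank ℂ (Q4 m ⧸ (P4 m (AcS m) ⊔ Wq k j m p)) := by
      show Module.finrank ℂ (Q4 m ⧸ Submodule.span ℂ (Am4 m ∪ Wm k j m p)) = _
      rw [hsp]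
    have e0 : Module.finrank ℂ (H1m k j m 0)
        = Module.finrank ℂ (Q4 m ⧸ (P4 m (AcS m) ⊔ Wq k j m 0)) := by
      show Module.finrank ℂ (Q4 m ⧸ Submodule.span ℂ (Am4 m ∪ Wm k j m 0)) = _
      rw [hs0]
    rw [e1, e0, hH0p, hH00]
    omega
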